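/- Let n = 2^k, k ≥ 2, and let s_k be the doubling magnitude sequence. For any sign sequence d ∈ {+1,−1}^{2^k−1}, the partial sums P_t = Σ_{i≤t} d_i s_k(i) mod 2^k are pairwise distinct for t = 0, 1, ..., 2^k − 1 (with P_0 = 0). In particular the walk visits each of the n positions exactly once. -/
import Mathlib


/-- The doubling magnitude sequence for the Magnus-Derek game on `2^k` nodes. -/
def magSeq (k : ℕ) : ℕ → List ℕ
  | 0 => []
  | 1 => [2 ^ (k - 1)]
  | j + 2 => magSeq k (j + 1) ++ [2 ^ (k - 1 - (j + 1))] ++ magSeq k (j + 1)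

lemma magSeq_length : ∀ (j k : ℕ), (magSeq k j).length = 2 ^ j - 1
  | 0, k => rfl
  | 1, k => rfl
  | (j + 2), k => by
      have ih := magSeq_length (j + 1) k
      have h1 : 1 ≤ 2 ^ (j + 1) := Nat.one_le_two_pow
      have h2 : 2 ^ (j + 2) = 2 * 2 ^ (j + 1) := by ring
      simp [magSeq, ih]
      omega

lemma magSeq_succ_map : ∀ (j k : ℕ), j ≤ k → magSeq (k + 1) j = (magSeq k j).map (2 * ·)
  | 0, k, _ => rfl
  | 1, k, h => by
      have : k + 1 - 1 = (k - 1) + 1 := by omega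
      simp [magSeq, this, pow_succ, mul_comm]
  | (j + 2), k, h => by
      have ih := magSeq_succ_map (j + 1) k (by omega)
      have hexp : k + 1 - 1 - (j + 1) = (k - 1 - (j + 1)) + 1 := by omega
      simp only [magSeq, ih, hexp, List.map_append, List.map_cons, List.map_nil]
      congr 2
      rw [pow_succ, mul_comm]

lemma getD_map_two (l : List ℕ) (i : ℕ) : ((l.map (2 * ·)).getD i 0 : ℕ) = 2 * l.getD i 0 := by
  rcases lt_or_ge i l.length with h | h
  · rw [List.getD_eq_getElem _ _ (by simpa using h), List.getD_eq_getElem _ _ h,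
      List.getElem_map]
  · rw [List.getD_eq_default _ _ (by simpa using h), List.getD_eq_default _ _ h]

lemma key : ∀ (k : ℕ) (d : ℕ → ℤ), (∀ i, d i = 1 ∨ d i = -1) →
    ∀ t₁ t₂ : ℕ, t₁ ≤ 2 ^ k - 1 → t₂ ≤ 2 ^ k - 1 →
    ((2 : ℤ) ^ k ∣ (∑ i ∈ Finset.range t₁, d i * ((magSeq k k).getD i 0) -
      ∑ i ∈ Finset.range t₂, d i * ((magSeq k k).getD i 0))) → t₁ = t₂ := by
  intro k
  induction k with
  | zero => intro d hd t₁ t₂ h1 h2 _; omega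
  | succ k ih =>
    intro d hd t₁ t₂ h1 h2 hdvd
    set n := 2 ^ k with hn
    have hn1 : 1 ≤ n := Nat.one_le_two_pow
    -- structure of magSeq (k+1) (k+1)
    have hB : magSeq (k + 1) k = (magSeq k k).map (2 * ·) := magSeq_succ_map k k le_rfl
    have hA : magSeq (k + 1) (k + 1) =
        ((magSeq k k).map (2 * ·) ++ [1]) ++ (magSeq k k).map (2 * ·) := by
      rcases Nat.exists_eq_add_of_le hn1 with _
      cases k with
      | zero => rfl
      | succ m =>
        show magSeq (m + 2) (m + 2) = _
        rw [magSeq, ← hB]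
        simp [Nat.sub_self]
    have hlenB : ((magSeq k k).map (2 * ·)).length = n - 1 := by
      rw [List.length_map, magSeq_length]
    have hlenB1 : (((magSeq k k).map (2 * ·)) ++ [1]).length = n := by
      simp [hlenB]; omega
    -- getD values
    have hgetL : ∀ i, i < n - 1 →
        ((magSeq (k + 1) (k + 1)).getD i 0 : ℕ) = 2 * (magSeq k k).getD i 0 := by
      intro i hi
      rw [hA, List.getD_append _ _ _ _ (by omega : i < (((magSeq k k).map (2 * ·)) ++ [1]).length),
        List.getD_append _ _ _ _ (by omega : i < ((magSeq k k).map (2 * ·)).length),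
        getD_map_two]
    have hgetM : ((magSeq (k + 1) (k + 1)).getD (n - 1) 0 : ℕ) = 1 := by
      rw [hA, List.getD_append _ _ _ _ (by omega : n - 1 < (((magSeq k k).map (2 * ·)) ++ [1]).length),
        List.getD_append_right _ _ _ _ (by omega : ((magSeq k k).map (2 * ·)).length ≤ n - 1)]
      simp [hlenB]
    have hgetR : ∀ i,
        ((magSeq (k + 1) (k + 1)).getD (n + i) 0 : ℕ) = 2 * (magSeq k k).getD i 0 := by
      intro i
      rw [hA, List.getD_append_right _ _ _ _ (by omega), hlenB1, getD_map_two,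
        Nat.add_sub_cancel_left]
    -- sums
    set S : ℕ → ℤ := fun t => ∑ i ∈ Finset.range t, d i * ((magSeq (k + 1) (k + 1)).getD i 0)
    set T : ℕ → ℤ := fun t => ∑ i ∈ Finset.range t, d i * ((magSeq k k).getD i 0)
    have hSlow : ∀ t, t ≤ n - 1 → S t = 2 * T t := by
      intro t ht
      rw [show (2 : ℤ) * T t = ∑ i ∈ Finset.range t, 2 * (d i * ((magSeq k k).getD i 0)) from
        Finset.mul_sum _ _ _]
      refine Finset.sum_congr rfl fun i hi => ?_
      rw [Finset.mem_range] at hi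
      rw [hgetL i (by omega)]
      push_cast
      ring
    have hShigh : ∀ r, S (n + r) = 2 * T (n - 1) + d (n - 1) +
        2 * ∑ i ∈ Finset.range r, d (n + i) * ((magSeq k k).getD i 0) := by
      intro r
      have : S (n + r) = S n + ∑ i ∈ Finset.range r, d (n + i) *
          ((magSeq (k + 1) (k + 1)).getD (n + i) 0) := by
        simp only [S, Finset.sum_range_add]
      rw [this]
      have hSn : S n = 2 * T (n - 1) + d (n - 1) := by
        have e1 : S n = S (n - 1) + d (n - 1) * ((magSeq (k + 1) (k + 1)).getD (n - 1) 0) := by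
          conv_lhs => rw [show n = (n - 1) + 1 by omega]
          simp only [S, Finset.sum_range_succ]
        rw [e1, hSlow (n - 1) le_rfl, hgetM]
        push_cast; ring
      rw [hSn]
      congr 1
      rw [Finset.mul_sum]
      refine Finset.sum_congr rfl fun i hi => ?_
      rw [hgetR i]; push_cast; ring
    -- parity facts
    have hodd : ∀ t, Odd (d t) := by
      intro t; rcases hd t with h | h <;> rw [h] <;> decide
    have hparity : ∀ t, t ≤ 2 ^ (k + 1) - 1 → (Even (S t) ↔ t ≤ n - 1) := by
      intro t ht
      constructor
      · intro he
        by_contra hc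
        have hr : ∃ r, t = n + r := ⟨t - n, by omega⟩
        rcases hr with ⟨r, rfl⟩
        rw [hShigh r] at he
        rcases he with ⟨m, hm⟩
        rcases hodd (n - 1) with ⟨m', hm'⟩
        omega
      · intro hle
        rw [hSlow t hle]; exact even_two_mul _
    have h2pow : (2 : ℤ) ^ (k + 1) = 2 * 2 ^ k := by ring
    -- case analysis
    rcases le_or_gt t₁ (n - 1) with hc1 | hc1 <;> rcases le_or_gt t₂ (n - 1) with hc2 | hc2
    · -- both in first half
      rw [show (∑ i ∈ Finset.range t₁, d i * ((magSeq (k+1) (k+1)).getD i 0)) = S t₁ from rfl,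
        show (∑ i ∈ Finset.range t₂, d i * ((magSeq (k+1) (k+1)).getD i 0)) = S t₂ from rfl] at hdvd
      rw [hSlow t₁ hc1, hSlow t₂ hc2, h2pow] at hdvd
      have : (2 : ℤ) ^ k ∣ T t₁ - T t₂ := by
        rcases hdvd with ⟨c, hc⟩
        exact ⟨c, by linarith⟩
      exact ih d hd t₁ t₂ (by omega) (by omega) this
    · -- t₁ even, t₂ odd : contradiction
      exfalso
      have he1 : Even (S t₁) := (hparity t₁ h1).2 hc1
      have he2 : ¬ Even (S t₂) := fun h => by have := (hparity t₂ h2).1 h; omega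
      obtain ⟨m, hm⟩ : (2 : ℤ) ∣ S t₁ - S t₂ := dvd_trans ⟨2 ^ k, by ring⟩ hdvd
      rcases he1 with ⟨a, ha⟩
      exact he2 ⟨a - m, by omega⟩
    · exfalso
      have he2 : Even (S t₂) := (hparity t₂ h2).2 hc2
      have he1 : ¬ Even (S t₁) := fun h => by have := (hparity t₁ h1).1 h; omega
      obtain ⟨m, hm⟩ : (2 : ℤ) ∣ S t₁ - S t₂ := dvd_trans ⟨2 ^ k, by ring⟩ hdvd
      rcases he2 with ⟨a, ha⟩
      exact he1 ⟨a + m, by omega⟩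
    · -- both in second half
      obtain ⟨r₁, rfl⟩ : ∃ r, t₁ = n + r := ⟨t₁ - n, by omega⟩
      obtain ⟨r₂, rfl⟩ : ∃ r, t₂ = n + r := ⟨t₂ - n, by omega⟩
      rw [show (∑ i ∈ Finset.range (n + r₁), d i * ((magSeq (k+1) (k+1)).getD i 0)) = S (n + r₁) from rfl,
        show (∑ i ∈ Finset.range (n + r₂), d i * ((magSeq (k+1) (k+1)).getD i 0)) = S (n + r₂) from rfl] at hdvd
      rw [hShigh r₁, hShigh r₂, h2pow] at hdvd
      set U₁ := ∑ i ∈ Finset.range r₁, d (n + i) * ((magSeq k k).getD i 0)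
      set U₂ := ∑ i ∈ Finset.range r₂, d (n + i) * ((magSeq k k).getD i 0)
      have hdvd' : (2 : ℤ) ^ k ∣ U₁ - U₂ := by
        rcases hdvd with ⟨c, hc⟩
        exact ⟨c, by linarith⟩
      have := ih (fun i => d (n + i)) (fun i => hd (n + i)) r₁ r₂
        (by omega) (by omega) hdvd'
      omega

/-- For any sign sequence, the partial sums `P t = Σ_{i<t} d i * s_k(i) mod 2^k`
are pairwise distinct for `t = 0, 1, …, 2^k - 1`: the walk visits each of the
`n = 2^k` positions exactly once. -/
theorem stmt_15 (k : ℕ) (hk : 2 ≤ k) (d : ℕ → ℤ) (hd : ∀ i, d i = 1 ∨ d i = -1) :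
    ∀ t₁ t₂ : ℕ, t₁ ≤ 2 ^ k - 1 → t₂ ≤ 2 ^ k - 1 →
      ((∑ i ∈ Finset.range t₁, d i * ((magSeq k k).getD i 0) : ℤ) : ZMod (2 ^ k)) =
      ((∑ i ∈ Finset.range t₂, d i * ((magSeq k k).getD i 0) : ℤ) : ZMod (2 ^ k)) →
      t₁ = t₂ := by
  intro t₁ t₂ h1 h2 heq
  refine key k d hd t₁ t₂ h1 h2 ?_
  have := (ZMod.intCast_eq_intCast_iff' _ _ _).1 heq
  have hdvd := Int.ModEq.dvd this.symm
  push_cast at hdvd ⊢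
  convert hdvd using 2
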